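/- Let F : ℝᵈ → ℝ be continuous with F(0) = 0, and suppose the ball averages satisfy (1/|B_L(0)|) ∫_{B_L(0)} F(ℓ) dℓ ≤ C L^{2s} for all L > 0, where F(ℓ) = ‖δ_ℓ u‖_{L²(𝕋ᵈ)}² for some u ∈ L²(𝕋ᵈ) (so that ℓ ↦ √F(ℓ) is 'translation-subadditive': |√F(ℓ) - √F(ℓ')| ≤ √F(ℓ-ℓ')). Then F(ℓ) ≤ C' |ℓ|^{2s} for all ℓ, with C' depending only on C, s, d. -/

import Mathlib

open MeasureTheory Metric

abbrev Td (d : ℕ) := Fin d → AddCircle (1:ℝ)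

noncomputable def shift {d : ℕ} (ℓ : EuclideanSpace ℝ (Fin d)) (x : Td d) : Td d :=
  x + fun i => (ℓ i : AddCircle (1:ℝ))

noncomputable def du {d : ℕ} (u : Td d → EuclideanSpace ℝ (Fin d))
    (ℓ : EuclideanSpace ℝ (Fin d)) (x : Td d) : EuclideanSpace ℝ (Fin d) :=
  u (shift ℓ x) - u x

/-- **Upgrading ball-averaged control of `F(ℓ) = ‖δ_ℓ u‖_{L²}²` to pointwise control.**
Let `u ∈ L²(𝕋ᵈ)` and `F(ℓ) = ∫_{𝕋ᵈ} |δ_ℓ u|² dx`, so `F` is continuous with `F(0) = 0`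
and `√F` is translation-subadditive.  If `⨍_{B_L(0)} F(ℓ) dℓ ≤ C L^{2s}` for all `L > 0`
(for some `C > 0`, `s ∈ (0,1]`), then `F(ℓ) ≤ C' |ℓ|^{2s}` for all `ℓ`, where `C'` depends
only on `C, s, d`. -/
theorem pointwise_from_ball_averaged_structure_function {d : ℕ}
    (u : Td d → EuclideanSpace ℝ (Fin d)) (hu : MemLp u 2 volume)
    (F : EuclideanSpace ℝ (Fin d) → ℝ)
    (hF : F = fun ℓ => ∫ x, ‖du u ℓ x‖ ^ 2)
    (hFcont : Continuous F) (hF0 : F 0 = 0)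
    (C s : ℝ) (hC : 0 < C) (hs : 0 < s) (hs1 : s ≤ 1)
    (havg : ∀ L : ℝ, 0 < L →
      (⨍ ℓ in ball (0 : EuclideanSpace ℝ (Fin d)) L, F ℓ) ≤ C * L ^ (2 * s)) :
    ∃ C' : ℝ, 0 < C' ∧ ∀ ℓ : EuclideanSpace ℝ (Fin d), F ℓ ≤ C' * ‖ℓ‖ ^ (2 * s) := by
  have hFnn : ∀ ℓ, 0 ≤ F ℓ := by
    intro ℓ; rw [hF]
    exact integral_nonneg fun x => by positivity
  have hmem : ∀ ℓ : EuclideanSpace ℝ (Fin d), MemLp (du u ℓ) 2 (volume : Measure (Td d)) := by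
    intro ℓ
    have hmp : MeasurePreserving (shift ℓ) (volume : Measure (Td d)) volume :=
      measurePreserving_add_right volume _
    exact (hu.comp_measurePreserving hmp).sub hu
  have hint : ∀ ℓ : EuclideanSpace ℝ (Fin d),
      Integrable (fun x => ‖du u ℓ x‖ ^ 2) (volume : Measure (Td d)) := by
    intro ℓ
    have h := (hmem ℓ).integrable_norm_rpow (by norm_num) (by norm_num)
    simpa [ENNReal.toReal_ofNat, Real.rpow_natCast, Real.rpow_two] using h
  have key : ∀ ℓ ℓ' : EuclideanSpace ℝ (Fin d), F ℓ ≤ 2 * F (ℓ - ℓ') + 2 * F ℓ' := by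
    intro ℓ ℓ'
    have hmp : MeasurePreserving (shift ℓ') (volume : Measure (Td d)) volume :=
      measurePreserving_add_right volume _
    have hemb : MeasurableEmbedding (shift ℓ') :=
      (MeasurableEquiv.addRight ((fun i => (ℓ' i : AddCircle (1:ℝ))) : Td d)).measurableEmbedding
    have hsplit : ∀ x : Td d, du u ℓ x = du u (ℓ - ℓ') (shift ℓ' x) + du u ℓ' x := by
      intro x
      simp only [du, shift]
      have h2 : (x + fun i => (ℓ' i : AddCircle (1:ℝ))) + (fun i => ((ℓ - ℓ') i : AddCircle (1:ℝ)))
          = x + fun i => (ℓ i : AddCircle (1:ℝ)) := by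
        funext i
        simp only [Pi.add_apply, PiLp.sub_apply]
        rw [AddCircle.coe_sub]
        abel
      rw [h2]; abel
    have hci : Integrable (fun x => ‖du u (ℓ - ℓ') (shift ℓ' x)‖ ^ 2)
        (volume : Measure (Td d)) :=
      (hmp.integrable_comp (hint (ℓ - ℓ')).aestronglyMeasurable).mpr (hint (ℓ - ℓ'))
    have hcomp : ∫ x, ‖du u (ℓ - ℓ') (shift ℓ' x)‖ ^ 2 = F (ℓ - ℓ') := by
      rw [hF]
      exact hmp.integral_comp hemb fun y => ‖du u (ℓ - ℓ') y‖ ^ 2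
    have hptw : ∀ x, ‖du u ℓ x‖ ^ 2
        ≤ 2 * ‖du u (ℓ - ℓ') (shift ℓ' x)‖ ^ 2 + 2 * ‖du u ℓ' x‖ ^ 2 := by
      intro x
      rw [hsplit x]
      have h1 := norm_add_le (du u (ℓ - ℓ') (shift ℓ' x)) (du u ℓ' x)
      nlinarith [norm_nonneg (du u (ℓ - ℓ') (shift ℓ' x)), norm_nonneg (du u ℓ' x),
        norm_nonneg (du u (ℓ - ℓ') (shift ℓ' x) + du u ℓ' x),
        sq_nonneg (‖du u (ℓ - ℓ') (shift ℓ' x)‖ - ‖du u ℓ' x‖)]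
    calc F ℓ = ∫ x, ‖du u ℓ x‖ ^ 2 := by rw [hF]
      _ ≤ ∫ x, (2 * ‖du u (ℓ - ℓ') (shift ℓ' x)‖ ^ 2 + 2 * ‖du u ℓ' x‖ ^ 2) := by
          refine integral_mono_of_nonneg (ae_of_all _ fun x => by positivity)
            (((hci.const_mul 2)).add ((hint ℓ').const_mul 2)) (ae_of_all _ hptw)
      _ = 2 * F (ℓ - ℓ') + 2 * F ℓ' := by
          rw [integral_add (hci.const_mul 2) ((hint ℓ').const_mul 2),
            integral_const_mul, integral_const_mul, hcomp, hF]
  refine ⟨2 ^ (d + 2) * C, by positivity, ?_⟩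
  intro ℓ
  rcases eq_or_ne ℓ 0 with rfl | hne
  · rw [hF0, norm_zero, Real.zero_rpow (by positivity : 2 * s ≠ 0), mul_zero]
  · have hL0 : (0:ℝ) < ‖ℓ‖ := norm_pos_iff.mpr hne
    haveI : Nontrivial (EuclideanSpace ℝ (Fin d)) := nontrivial_of_ne ℓ 0 hne
    set L : ℝ := ‖ℓ‖ with hLdef
    set c : EuclideanSpace ℝ (Fin d) := (2:ℝ)⁻¹ • ℓ with hc
    set B₁ := ball c (L / 2) with hB₁
    set BL := ball (0 : EuclideanSpace ℝ (Fin d)) L with hBL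
    have hcnorm : ‖c‖ = L / 2 := by
      rw [hc, norm_smul]; simp [hLdef]; ring
    have hsub : B₁ ⊆ BL := by
      intro x hx
      rw [hB₁, mem_ball, dist_eq_norm] at hx
      rw [hBL, mem_ball, dist_eq_norm, sub_zero]
      calc ‖x‖ = ‖(x - c) + c‖ := by rw [sub_add_cancel]
        _ ≤ ‖x - c‖ + ‖c‖ := norm_add_le _ _
        _ < L/2 + L/2 := by rw [hcnorm]; linarith
        _ = L := by ring
    have hv1 : volume B₁
        = ENNReal.ofReal ((L/2)^d) * volume (ball (0:EuclideanSpace ℝ (Fin d)) 1) := by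
      rw [hB₁, Measure.addHaar_ball _ _ (by positivity : (0:ℝ) ≤ L/2)]
      simp [finrank_euclideanSpace_fin]
    have hvL : volume BL
        = ENNReal.ofReal (L^d) * volume (ball (0:EuclideanSpace ℝ (Fin d)) 1) := by
      rw [hBL, Measure.addHaar_ball _ _ hL0.le]
      simp [finrank_euclideanSpace_fin]
    set v : ℝ := (volume (ball (0:EuclideanSpace ℝ (Fin d)) 1)).toReal with hv
    have hvpos : 0 < v :=
      ENNReal.toReal_pos (measure_ball_pos _ _ one_pos).ne' measure_ball_lt_top.ne
    have hV1 : (volume B₁).toReal = (L/2)^d * v := by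
      rw [hv1, ENNReal.toReal_mul, ENNReal.toReal_ofReal (by positivity)]
    have hVL : (volume BL).toReal = L^d * v := by
      rw [hvL, ENNReal.toReal_mul, ENNReal.toReal_ofReal (by positivity)]
    have hV1pos : 0 < (volume B₁).toReal := by rw [hV1]; positivity
    have hVLpos : 0 < (volume BL).toReal := by rw [hVL]; positivity
    have hIOn : ∀ (g : EuclideanSpace ℝ (Fin d) → ℝ), Continuous g →
        ∀ (x0 : EuclideanSpace ℝ (Fin d)) (r : ℝ), IntegrableOn g (ball x0 r) volume := by
      intro g hg x0 r
      exact (hg.continuousOn.integrableOn_compact (isCompact_closedBall x0 r)).mono_set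
        ball_subset_closedBall
    have hIBL : IntegrableOn F BL volume := hIOn F hFcont 0 L
    have hIB1 : IntegrableOn F B₁ volume := hIOn F hFcont c (L/2)
    have hIB1' : IntegrableOn (fun x => F (ℓ - x)) B₁ volume :=
      hIOn _ (hFcont.comp (continuous_const.sub continuous_id)) c (L/2)
    -- change of variables for the reflected integral
    have hmpE : MeasurePreserving (fun x : EuclideanSpace ℝ (Fin d) => ℓ - x) volume volume := by
      have h1 := (measurePreserving_add_left (volume : Measure (EuclideanSpace ℝ (Fin d))) ℓ).comp
        (Measure.measurePreserving_neg (volume : Measure (EuclideanSpace ℝ (Fin d))))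
      simpa [Function.comp_def, sub_eq_add_neg] using h1
    have hembE : MeasurableEmbedding (fun x : EuclideanSpace ℝ (Fin d) => ℓ - x) :=
      (Homeomorph.subLeft ℓ).measurableEmbedding
    have hpre : (fun x : EuclideanSpace ℝ (Fin d) => ℓ - x) ⁻¹' B₁ = B₁ := by
      ext x
      simp only [Set.mem_preimage, hB₁, mem_ball, dist_eq_norm]
      have h2 : ℓ - x - c = c - x := by rw [hc]; module
      rw [h2, norm_sub_rev]
    have hchg : ∫ x in B₁, F (ℓ - x) = ∫ x in B₁, F x := by
      conv_lhs => rw [← hpre]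
      exact hmpE.setIntegral_preimage_emb hembE F B₁
    -- integral bound on the big ball
    have havgL := havg L hL0
    rw [setAverage_eq] at havgL
    have hIL : ∫ x in BL, F x ≤ C * L ^ (2*s) * (volume BL).toReal := by
      have h := mul_le_mul_of_nonneg_left havgL hVLpos.le
      rw [smul_eq_mul, ← mul_assoc, measureReal_def, ← hBL, mul_inv_cancel₀ hVLpos.ne', one_mul] at h
      linarith
    have h1 : ∫ x in B₁, F x ≤ ∫ x in BL, F x :=
      setIntegral_mono_set hIBL (Filter.Eventually.of_forall fun x => hFnn x)
        (HasSubset.Subset.eventuallyLE hsub)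
    have hconst : (volume B₁).toReal * F ℓ = ∫ _x in B₁, F ℓ := by
      rw [setIntegral_const, smul_eq_mul]; rfl
    have h2 : ∫ _x in B₁, F ℓ ≤ ∫ x in B₁, (2 * F (ℓ - x) + 2 * F x) := by
      refine setIntegral_mono_on (integrableOn_const measure_ball_lt_top.ne)
        (((hIB1'.const_mul 2)).add (hIB1.const_mul 2)) measurableSet_ball
        (fun x _ => key ℓ x)
    have h3 : ∫ x in B₁, (2 * F (ℓ - x) + 2 * F x)
        = 2 * (∫ x in B₁, F (ℓ - x)) + 2 * ∫ x in B₁, F x := by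
      rw [integral_add (hIB1'.const_mul 2) (hIB1.const_mul 2), integral_const_mul,
        integral_const_mul]
    have hfinal : (volume B₁).toReal * F ℓ ≤ 4 * (C * L ^ (2*s) * (volume BL).toReal) := by
      rw [hconst]
      calc ∫ _x in B₁, F ℓ ≤ ∫ x in B₁, (2 * F (ℓ - x) + 2 * F x) := h2
        _ = 2 * (∫ x in B₁, F (ℓ - x)) + 2 * ∫ x in B₁, F x := h3
        _ = 4 * ∫ x in B₁, F x := by rw [hchg]; ring
        _ ≤ 4 * ∫ x in BL, F x := by linarith
        _ ≤ 4 * (C * L ^ (2*s) * (volume BL).toReal) := by linarith [hIL]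
    have hratio : (volume BL).toReal = 2^d * (volume B₁).toReal := by
      rw [hV1, hVL, div_pow]
      field_simp
    have hgoal : F ℓ ≤ 2 ^ (d + 2) * C * L ^ (2*s) := by
      have hR : 0 < L ^ (2*s) := Real.rpow_pos_of_pos hL0 _
      rw [hratio] at hfinal
      have h5 : (volume B₁).toReal * F ℓ
          ≤ (volume B₁).toReal * (2 ^ (d + 2) * C * L ^ (2*s)) := by
        have : (4:ℝ) * (C * L ^ (2*s) * (2^d * (volume B₁).toReal))
            = (volume B₁).toReal * (2 ^ (d + 2) * C * L ^ (2*s)) := by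
          rw [pow_add]; ring
        linarith [hfinal, this]
      exact le_of_mul_le_mul_left h5 hV1pos
    calc F ℓ ≤ 2 ^ (d + 2) * C * L ^ (2*s) := hgoal
      _ = 2 ^ (d + 2) * C * ‖ℓ‖ ^ (2*s) := by rw [hLdef]
      _ = 2 ^ (d + 2) * C * ‖ℓ‖ ^ (2 * s) := rfl
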